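/- Let 0 < S₀ ≤ S₁ and let q be a real number with 0 < q ≤ S₀. Set x₀ = 1 − q/S₀ and x₁ = 1 − q/S₁, and define S_q : [0,1] → ℝ by S_q(x) = S₀ on [0,x₀], S_q(x) = q/(1−x) on (x₀,x₁), and S_q(x) = S₁ on [x₁,1]. Then ∫₀¹ (1−x)·S_q(x)² dx = S₀²/2 + q²·log(S₁/S₀). -/

import Mathlib

open MeasureTheory intervalIntegral

theorem weighted_integral_of_three_segment_profile (S₀ S₁ q : ℝ) (hS₀ : 0 < S₀)
    (hS₀S₁ : S₀ ≤ S₁) (hq0 : 0 < q) (hq : q ≤ S₀) (S : ℝ → ℝ)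
    (hleft : ∀ x ∈ Set.Icc (0:ℝ) (1 - q / S₀), S x = S₀)
    (hmid : ∀ x ∈ Set.Ioo (1 - q / S₀) (1 - q / S₁), S x = q / (1 - x))
    (hright : ∀ x ∈ Set.Icc (1 - q / S₁) (1:ℝ), S x = S₁) :
    (∫ x in (0:ℝ)..1, (1 - x) * (S x)^2) = S₀^2 / 2 + q^2 * Real.log (S₁ / S₀) := by
  have hS₁ : 0 < S₁ := lt_of_lt_of_le hS₀ hS₀S₁
  have hS₀' : S₀ ≠ 0 := ne_of_gt hS₀
  have hS₁' : S₁ ≠ 0 := ne_of_gt hS₁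
  have hq' : q ≠ 0 := ne_of_gt hq0
  set x₀ : ℝ := 1 - q / S₀ with hx₀def
  set x₁ : ℝ := 1 - q / S₁ with hx₁def
  have hq0' : 0 < q / S₀ := div_pos hq0 hS₀
  have hq1' : 0 < q / S₁ := div_pos hq0 hS₁
  have hdiv : q / S₁ ≤ q / S₀ := div_le_div_of_nonneg_left hq0.le hS₀ hS₀S₁
  have hqS : q / S₀ ≤ 1 := (div_le_one hS₀).mpr hq
  have h0x₀ : (0:ℝ) ≤ x₀ := by simp [hx₀def]; linarith
  have hx₀x₁ : x₀ ≤ x₁ := by simp [hx₀def, hx₁def]; linarith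
  have hx₁1 : x₁ ≤ 1 := by simp [hx₁def]; linarith
  have h1x₀ : 1 - x₀ = q / S₀ := by simp [hx₀def]
  have h1x₁ : 1 - x₁ = q / S₁ := by simp [hx₁def]
  have hpos : ∀ x ∈ Set.Icc x₀ x₁, 0 < 1 - x := fun x hx => by
    have : q / S₁ ≤ 1 - x := by rw [← h1x₁]; linarith [hx.2]
    linarith
  -- the three explicit integrands
  set f : ℝ → ℝ := fun x => (1 - x) * (S x)^2 with hfdef
  have heq1 : Set.EqOn f (fun x => (1 - x) * S₀^2) (Set.uIcc (0:ℝ) x₀) := by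
    intro x hx
    rw [Set.uIcc_of_le h0x₀] at hx
    simp only [hfdef]
    rw [hleft x hx]
  have heq2 : Set.EqOn f (fun x => q^2 / (1 - x)) (Set.uIcc x₀ x₁) := by
    intro x hx
    rw [Set.uIcc_of_le hx₀x₁] at hx
    have hx1 : 0 < 1 - x := hpos x hx
    have hSx : S x = q / (1 - x) := by
      rcases eq_or_lt_of_le hx.1 with h | h
      · rw [← h, hleft x₀ ⟨h0x₀, le_refl _⟩, h1x₀]
        field_simp
      rcases eq_or_lt_of_le hx.2 with h' | h'
      · rw [h', hright x₁ ⟨le_refl _, hx₁1⟩, h1x₁]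
        field_simp
      · exact hmid x ⟨h, h'⟩
    simp only [hfdef, hSx]
    field_simp
  have heq3 : Set.EqOn f (fun x => (1 - x) * S₁^2) (Set.uIcc x₁ 1) := by
    intro x hx
    rw [Set.uIcc_of_le hx₁1] at hx
    simp only [hfdef]
    rw [hright x hx]
  -- integrability
  have hint1g : IntervalIntegrable (fun x => (1 - x) * S₀^2) volume 0 x₀ :=
    (((continuous_const.sub continuous_id).mul continuous_const).intervalIntegrable) 0 x₀
  have hint2g : IntervalIntegrable (fun x => q^2 / (1 - x)) volume x₀ x₁ := by
    apply ContinuousOn.intervalIntegrable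
    apply ContinuousOn.div continuousOn_const (continuous_const.sub continuous_id).continuousOn
    intro x hx
    rw [Set.uIcc_of_le hx₀x₁] at hx
    exact ne_of_gt (hpos x hx)
  have hint3g : IntervalIntegrable (fun x => (1 - x) * S₁^2) volume x₁ 1 :=
    (((continuous_const.sub continuous_id).mul continuous_const).intervalIntegrable) x₁ 1
  have hint1 : IntervalIntegrable f volume 0 x₀ := by
    rw [intervalIntegrable_iff] at hint1g ⊢
    exact hint1g.congr_fun (fun x hx => (heq1 (Set.uIoc_subset_uIcc hx)).symm ▸ rfl)
      measurableSet_uIoc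
  have hint2 : IntervalIntegrable f volume x₀ x₁ := by
    rw [intervalIntegrable_iff] at hint2g ⊢
    exact hint2g.congr_fun (fun x hx => (heq2 (Set.uIoc_subset_uIcc hx)).symm ▸ rfl)
      measurableSet_uIoc
  have hint3 : IntervalIntegrable f volume x₁ 1 := by
    rw [intervalIntegrable_iff] at hint3g ⊢
    exact hint3g.congr_fun (fun x hx => (heq3 (Set.uIoc_subset_uIcc hx)).symm ▸ rfl)
      measurableSet_uIoc
  -- split
  have hsplit : (∫ x in (0:ℝ)..1, f x) =
      (∫ x in (0:ℝ)..x₀, f x) + (∫ x in x₀..x₁, f x) + (∫ x in x₁..(1:ℝ), f x) := by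
    rw [integral_add_adjacent_intervals hint1 hint2,
      integral_add_adjacent_intervals (hint1.trans hint2) hint3]
  -- compute each piece
  have hI1 : (∫ x in (0:ℝ)..x₀, f x) = S₀^2 / 2 - q^2 / 2 := by
    rw [integral_congr heq1]
    have : (∫ x in (0:ℝ)..x₀, (1 - x) * S₀^2) =
        ∫ x in (0:ℝ)..x₀, (S₀^2 - S₀^2 * x) := by
      apply integral_congr; intro x _; ring
    rw [this, integral_sub (g := fun x => S₀^2 * x) (intervalIntegrable_const) ((continuous_const.mul continuous_id').intervalIntegrable _ _),
      intervalIntegral.integral_const, intervalIntegral.integral_const_mul, integral_id]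
    have hq_eq : q = S₀ * (1 - x₀) := by rw [h1x₀]; field_simp
    rw [hq_eq, smul_eq_mul]
    ring
  have hI3 : (∫ x in x₁..(1:ℝ), f x) = q^2 / 2 := by
    rw [integral_congr heq3]
    have : (∫ x in x₁..(1:ℝ), (1 - x) * S₁^2) =
        ∫ x in x₁..(1:ℝ), (S₁^2 - S₁^2 * x) := by
      apply integral_congr; intro x _; ring
    rw [this, integral_sub (g := fun x => S₁^2 * x) (intervalIntegrable_const) ((continuous_const.mul continuous_id').intervalIntegrable _ _),
      intervalIntegral.integral_const, intervalIntegral.integral_const_mul, integral_id]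
    have hq_eq : q = S₁ * (1 - x₁) := by rw [h1x₁]; field_simp
    rw [hq_eq, smul_eq_mul]
    ring
  have hI2 : (∫ x in x₀..x₁, f x) = q^2 * Real.log (S₁ / S₀) := by
    rw [integral_congr heq2]
    have hcomp : (∫ x in x₀..x₁, q^2 / (1 - x)) =
        ∫ u in (1 - x₁)..(1 - x₀), q^2 / u := by
      exact integral_comp_sub_left (fun u => q^2 / u) 1
    rw [hcomp, h1x₀, h1x₁]
    have : (∫ u in (q/S₁)..(q/S₀), q^2 / u) = q^2 * ∫ u in (q/S₁)..(q/S₀), 1/u := by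
      rw [← intervalIntegral.integral_const_mul]
      apply integral_congr; intro u _; ring
    rw [this, integral_one_div]
    · rw [show q / S₀ / (q / S₁) = S₁ / S₀ by field_simp]
    · intro h
      rw [Set.uIcc_of_le hdiv] at h
      linarith [h.1, hq1']
  rw [show (fun x => (1 - x) * (S x)^2) = f from rfl] at *
  rw [hsplit, hI1, hI2, hI3]
  ring
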